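/- Let (a,b) ∈ ℍ × ℍ with |a|² + |b|² = 1 and let (w,t) ∈ ℍ × ℝ with |w|² + t² = 1 and t < 1. Then |α_{a,b}(w,t)|² = 1/2 + (1/2)·⟨(w,t), (2·conj(a)·b, |a|² − |b|²)⟩, where ⟨(w,t),(w′,t′)⟩ = Re(conj(w)·w′) + t·t′ is the Euclidean inner product on ℍ × ℝ. -/

import Mathlib

open scoped Quaternion RealInnerProductSpace

/-- `α_{a,b}(w,t) = (1/√(2(1−t)))·(a·w) + √((1−t)/2)·b`. -/
noncomputable def alphaFn (a b : ℍ[ℝ]) (w : ℍ[ℝ]) (t : ℝ) : ℍ[ℝ] :=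
  (1 / Real.sqrt (2 * (1 - t))) • (a * w) + Real.sqrt ((1 - t) / 2) • b

/-- The Euclidean inner product on `ℍ × ℝ`:
`⟨(w,t),(w′,t′)⟩ = Re(conj(w)·w′) + t·t′`. -/
noncomputable def euclInner (p q : ℍ[ℝ] × ℝ) : ℝ := (star p.1 * q.1).re + p.2 * q.2

/-- Let `(a,b) ∈ ℍ × ℍ` with `|a|² + |b|² = 1` and let `(w,t) ∈ ℍ × ℝ` with
`|w|² + t² = 1` and `t < 1`.  Then
`|α_{a,b}(w,t)|² = 1/2 + (1/2)·⟨(w,t), (2·conj(a)·b, |a|² − |b|²)⟩`. -/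
theorem norm_sq_alphaFn (a b w : ℍ[ℝ]) (t : ℝ)
    (hab : ‖a‖ ^ 2 + ‖b‖ ^ 2 = 1) (hwt : ‖w‖ ^ 2 + t ^ 2 = 1) (ht : t < 1) :
    ‖alphaFn a b w t‖ ^ 2 =
      1 / 2 + (1 / 2) * euclInner (w, t) (2 * (star a * b), ‖a‖ ^ 2 - ‖b‖ ^ 2) := by
  have h1 : (0:ℝ) < 1 - t := by linarith
  set c := 1 / Real.sqrt (2 * (1 - t)) with hc
  set d := Real.sqrt ((1 - t) / 2) with hd
  have hc2 : c ^ 2 = 1 / (2 * (1 - t)) := by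
    rw [hc, div_pow, one_pow, Real.sq_sqrt (by linarith)]
  have hd2 : d ^ 2 = (1 - t) / 2 := Real.sq_sqrt (by linarith)
  have hcd : c * d = 1 / 2 := by
    rw [hc, hd, div_mul_eq_mul_div, one_mul, ← Real.sqrt_div (by linarith)]
    have : (1 - t) / 2 / (2 * (1 - t)) = 1 / 4 := by field_simp; ring
    rw [this]
    rw [show (1:ℝ)/4 = (1/2)^2 by norm_num, Real.sqrt_sq (by norm_num)]
  have key : ‖alphaFn a b w t‖ ^ 2 =
      c ^ 2 * (‖a‖ ^ 2 * ‖w‖ ^ 2) + 2 * (c * d) * ⟪a * w, b⟫ + d ^ 2 * ‖b‖ ^ 2 := by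
    rw [alphaFn, norm_add_sq_real, norm_smul, norm_smul, real_inner_smul_left,
      real_inner_smul_right, norm_mul]
    have hcnn : 0 ≤ c := by positivity
    have hdnn : 0 ≤ d := Real.sqrt_nonneg _
    rw [Real.norm_of_nonneg hcnn, Real.norm_of_nonneg hdnn]
    ring
  rw [key, hc2, hd2, hcd]
  have hinner : ⟪a * w, b⟫ = (star w * (star a * b)).re := by
    simp only [Quaternion.inner_def, Quaternion.re_mul, Quaternion.imI_mul,
      Quaternion.imJ_mul, Quaternion.imK_mul, Quaternion.re_star, Quaternion.imI_star,
      Quaternion.imJ_star, Quaternion.imK_star]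
    ring
  have hw2 : ‖w‖ ^ 2 = 1 - t ^ 2 := by linarith
  rw [hinner, hw2, euclInner]
  simp only
  have h2 : (star w * (2 * (star a * b))).re = 2 * (star w * (star a * b)).re := by
    rw [two_mul, mul_add, Quaternion.re_add]; ring
  rw [h2]
  field_simp
  linear_combination (1 - t) * hab
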